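/- Lefschetz zeta function of a permutative squared-by-blocks map on a wedge sum (main theorem, part (b)): in the permutative algebraic model, with M := lcm(s₁,…,s_q), the identity ((1 − t)·ζ_f(t))^M = ∏_{j=1}^q ( ∏_{i∈Λ_j} (1 − t^{s_j}) · ζ_{f_ii^{s_j}}(t^{s_j}) )^{M/s_j} holds in the ring ℚ[[t]] of formal power series (this is the paper's formula ζ_f(t) = (1−t)^{−1} ∏_{j=1}^q (∏_{i∈Λ_j} (1−t^{s_j}) ζ_{f_ii^{s_j}}(t^{s_j}))^{1/s_j}, with both sides raised to the power M to avoid fractional exponents). -/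

import Mathlib

/-- The exponential `exp(f) = ∑_{j ≥ 0} f^j / j!` of a formal power series `f ∈ ℚ[[t]]`
(intended for series with zero constant term). -/
noncomputable def expPS (f : PowerSeries ℚ) : PowerSeries ℚ :=
  PowerSeries.mk fun n =>
    PowerSeries.coeff n (∑ j ∈ Finset.range (n + 1), (j.factorial : ℚ)⁻¹ • f ^ j)

/-- The Lefschetz zeta function `ζ(t) = exp(∑_{m ≥ 1} L(m)·t^m/m) ∈ ℚ[[t]]` of a sequence of
Lefschetz numbers `L : ℕ → ℚ`. -/
noncomputable def lefschetzZeta (L : ℕ → ℚ) : PowerSeries ℚ :=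
  expPS (PowerSeries.mk fun m => if m = 0 then 0 else L m / (m : ℚ))

/-- Substitution of `t^d` for `t` in a formal power series `g(t) ∈ ℚ[[t]]`: the series
`g(t^d)`. -/
noncomputable def substPow (d : ℕ) (g : PowerSeries ℚ) : PowerSeries ℚ :=
  PowerSeries.mk fun n => if d ∣ n then PowerSeries.coeff (n / d) g else 0

namespace Stmt9Aux

open PowerSeries

lemma coeff_pow_eq_zero {f : PowerSeries ℚ} (hf : constantCoeff f = 0)
    {n j : ℕ} (h : n < j) : coeff n (f ^ j) = 0 :=
  X_pow_dvd_iff.mp (pow_dvd_pow_of_dvd (X_dvd_iff.mpr hf) j) n h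

lemma coeff_expPS {f : PowerSeries ℚ} (hf : constantCoeff f = 0)
    {n K : ℕ} (hK : n < K) :
    coeff n (expPS f) =
      coeff n (∑ j ∈ Finset.range K, (j.factorial : ℚ)⁻¹ • f ^ j) := by
  have key : ∀ K', n < K' →
      coeff n (∑ j ∈ Finset.range K', (j.factorial : ℚ)⁻¹ • f ^ j)
        = coeff n (∑ j ∈ Finset.range (n+1), (j.factorial : ℚ)⁻¹ • f ^ j) := by
    intro K' hK'
    rw [map_sum, map_sum]
    refine (Finset.sum_subset (Finset.range_subset_range.mpr hK') ?_).symm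
    intro j hj hj'
    have : n < j := by
      simp only [Finset.mem_range, not_lt] at hj' ; omega
    rw [map_smul, coeff_pow_eq_zero hf this, smul_zero]
  rw [expPS, coeff_mk, key K hK]

lemma coeff_zero_expPS (f : PowerSeries ℚ) : coeff 0 (expPS f) = 1 := by
  rw [expPS, coeff_mk]
  simp

lemma coeff_mul_right_congr {g₁ g₂ h : PowerSeries ℚ} {n : ℕ}
    (H : ∀ m ≤ n, coeff m g₁ = coeff m g₂) :
    coeff n (h * g₁) = coeff n (h * g₂) := by
  rw [coeff_mul, coeff_mul]
  refine Finset.sum_congr rfl fun p hp => ?_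
  rw [Finset.HasAntidiagonal.mem_antidiagonal] at hp
  rw [H p.2 (by omega)]

lemma derivativeFun_pow (f : PowerSeries ℚ) (j : ℕ) :
    derivativeFun (f ^ (j+1)) = ((j:ℚ)+1) • (f ^ j * derivativeFun f) := by
  induction j with
  | zero => simp
  | succ j ih =>
    rw [pow_succ (f) (j+1), derivativeFun_mul, ih]
    simp only [smul_eq_mul, smul_eq_C_mul, Nat.cast_add, Nat.cast_one, map_add, map_one]
    ring

lemma deriv_expPS {f : PowerSeries ℚ} (hf : constantCoeff f = 0) :
    derivativeFun (expPS f) = derivativeFun f * expPS f := by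
  ext n
  have h1 : coeff n (derivativeFun (expPS f))
      = coeff n (derivativeFun (∑ j ∈ Finset.range (n+2), (j.factorial : ℚ)⁻¹ • f ^ j)) := by
    simp only [show ∀ g : PowerSeries ℚ, derivativeFun g = derivative ℚ g from fun _ => rfl]
    rw [coeff_derivativeFun, coeff_derivativeFun, coeff_expPS (K := n+2) hf (by omega)]
  have h2 : derivativeFun (∑ j ∈ Finset.range (n+2), (j.factorial : ℚ)⁻¹ • f ^ j)
      = derivativeFun f * (∑ j ∈ Finset.range (n+1), (j.factorial : ℚ)⁻¹ • f ^ j) := by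
    have : ∀ (K : ℕ), derivativeFun (∑ j ∈ Finset.range (K+1), (j.factorial : ℚ)⁻¹ • f ^ j)
        = derivativeFun f * (∑ j ∈ Finset.range K, (j.factorial : ℚ)⁻¹ • f ^ j) := by
      intro K
      have hsum : derivativeFun (∑ j ∈ Finset.range (K+1), (j.factorial : ℚ)⁻¹ • f ^ j)
          = ∑ j ∈ Finset.range (K+1), derivativeFun ((j.factorial : ℚ)⁻¹ • f ^ j) :=
        map_sum (PowerSeries.derivative ℚ) _ _
      rw [hsum, Finset.sum_range_succ']
      simp only [Nat.factorial_zero, Nat.cast_one, inv_one, pow_zero, one_smul,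
        derivativeFun_one, add_zero]
      rw [Finset.mul_sum]
      refine Finset.sum_congr rfl fun j hj => ?_
      rw [derivativeFun_smul, derivativeFun_pow, smul_smul]
      have hfac : ((j+1).factorial : ℚ)⁻¹ * ((j:ℚ)+1) = (j.factorial : ℚ)⁻¹ := by
        have h2 : (j.factorial : ℚ) ≠ 0 := Nat.cast_ne_zero.mpr j.factorial_ne_zero
        have h1 : (j:ℚ) + 1 ≠ 0 := by positivity
        rw [Nat.factorial_succ]
        push_cast
        field_simp
      rw [hfac, mul_smul_comm, mul_comm]
    rw [show n + 2 = (n+1) + 1 by rfl, this]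
  rw [h1, h2]
  exact coeff_mul_right_congr fun m hm => (coeff_expPS hf (by omega)).symm


lemma ode_unique {u h₁ h₂ : PowerSeries ℚ}
    (e₁ : derivativeFun h₁ = u * h₁) (e₂ : derivativeFun h₂ = u * h₂)
    (e0 : coeff 0 h₁ = coeff 0 h₂) : h₁ = h₂ := by
  have key : ∀ n, ∀ m ≤ n, coeff m h₁ = coeff m h₂ := by
    intro n
    induction n with
    | zero => intro m hm; rw [Nat.le_zero.mp hm]; exact e0
    | succ n ih =>
      intro m hm
      rcases Nat.lt_or_ge m (n+1) with h | h
      · exact ih m (by omega)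
      · have hm' : m = n + 1 := by omega
        subst hm'
        have c1 : coeff (n+1) h₁ * ((n:ℚ)+1) = coeff (n+1) h₂ * ((n:ℚ)+1) := by
          rw [← coeff_derivativeFun, ← coeff_derivativeFun, show derivative ℚ h₁ = u * h₁ from e₁,
            show derivative ℚ h₂ = u * h₂ from e₂]
          exact coeff_mul_right_congr fun m hm => ih m hm
        have : ((n:ℚ)+1) ≠ 0 := by positivity
        exact mul_right_cancel₀ this c1
  ext m
  exact key m m le_rfl

lemma expPS_add {f g : PowerSeries ℚ} (hf : constantCoeff f = 0)
    (hg : constantCoeff g = 0) : expPS (f + g) = expPS f * expPS g := by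
  have hfg : constantCoeff (f + g) = 0 := by rw [map_add, hf, hg, add_zero]
  refine ode_unique (u := derivativeFun (f + g)) (deriv_expPS hfg) ?_ ?_
  · rw [derivativeFun_mul, deriv_expPS hf, deriv_expPS hg, derivativeFun_add,
      smul_eq_mul, smul_eq_mul]
    ring
  · rw [coeff_zero_expPS, coeff_zero_eq_constantCoeff, map_mul]
    have : ∀ p : PowerSeries ℚ, constantCoeff (expPS p) = 1 := fun p => by
      rw [← coeff_zero_eq_constantCoeff_apply, coeff_zero_expPS]
    rw [this, this, mul_one]

lemma expPS_zero : expPS (0 : PowerSeries ℚ) = 1 := by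
  ext n
  rw [expPS, coeff_mk]
  have : ∑ j ∈ Finset.range (n + 1), (j.factorial : ℚ)⁻¹ • (0:PowerSeries ℚ) ^ j = 1 := by
    rw [Finset.sum_eq_single 0]
    · simp
    · intro j hj hj0
      rw [zero_pow hj0, smul_zero]
    · simp
  rw [this]

lemma expPS_pow {f : PowerSeries ℚ} (hf : constantCoeff f = 0) (M : ℕ) :
    expPS f ^ M = expPS (M • f) := by
  induction M with
  | zero => rw [pow_zero, zero_smul, expPS_zero]
  | succ M ih =>
    have hMf : constantCoeff (M • f) = 0 := by rw [map_nsmul, hf, smul_zero]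
    rw [pow_succ, ih, ← expPS_add hMf hf, succ_nsmul]

lemma expPS_sum {ι : Type*} (t : Finset ι) (g : ι → PowerSeries ℚ)
    (hg : ∀ i ∈ t, constantCoeff (g i) = 0) :
    ∏ i ∈ t, expPS (g i) = expPS (∑ i ∈ t, g i) := by
  induction t using Finset.cons_induction with
  | empty => simp [expPS_zero]
  | cons a t ha ih =>
    rw [Finset.prod_cons, Finset.sum_cons, ih (fun i hi => hg i (Finset.mem_cons_of_mem hi)),
      expPS_add (hg a (Finset.mem_cons_self a t))]
    rw [map_sum]
    exact Finset.sum_eq_zero fun i hi => hg i (Finset.mem_cons_of_mem hi)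


lemma coeff_substPow (d : ℕ) (g : PowerSeries ℚ) (n : ℕ) :
    coeff n (substPow d g) = if d ∣ n then coeff (n / d) g else 0 :=
  coeff_mk _ _

lemma constantCoeff_substPow (d : ℕ) (g : PowerSeries ℚ) :
    constantCoeff (substPow d g) = constantCoeff g := by
  rw [← coeff_zero_eq_constantCoeff_apply, ← coeff_zero_eq_constantCoeff_apply,
    coeff_substPow, if_pos (dvd_zero d), Nat.zero_div]

lemma substPow_sum {ι : Type*} (d : ℕ) (t : Finset ι) (g : ι → PowerSeries ℚ) :
    substPow d (∑ i ∈ t, g i) = ∑ i ∈ t, substPow d (g i) := by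
  ext n
  rw [coeff_substPow, map_sum, map_sum]
  simp only [coeff_substPow]
  by_cases h : d ∣ n <;> simp [h]

lemma substPow_smul (d : ℕ) (r : ℚ) (g : PowerSeries ℚ) :
    substPow d (r • g) = r • substPow d g := by
  ext n
  rw [coeff_substPow, map_smul, map_smul, coeff_substPow]
  by_cases h : d ∣ n <;> simp [h]

lemma substPow_add (d : ℕ) (a b : PowerSeries ℚ) :
    substPow d (a + b) = substPow d a + substPow d b := by
  ext n
  rw [coeff_substPow, map_add, map_add, coeff_substPow, coeff_substPow]
  by_cases h : d ∣ n <;> simp [h]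

lemma substPow_mul {d : ℕ} (hd : 0 < d) (a b : PowerSeries ℚ) :
    substPow d (a * b) = substPow d a * substPow d b := by
  ext n
  rw [coeff_substPow]
  by_cases h : d ∣ n
  · rw [if_pos h, coeff_mul]
    obtain ⟨m, rfl⟩ := h
    rw [Nat.mul_div_cancel_left m hd, coeff_mul]
    have hsub : (Finset.HasAntidiagonal.antidiagonal m).image (fun q : ℕ × ℕ => (d * q.1, d * q.2)) ⊆
        Finset.HasAntidiagonal.antidiagonal (d * m) := by
      intro p hp
      simp only [Finset.mem_image, Finset.HasAntidiagonal.mem_antidiagonal] at hp ⊢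
      obtain ⟨q, hq, rfl⟩ := hp
      rw [← Nat.mul_add, hq]
    have hzero : ∀ p ∈ Finset.HasAntidiagonal.antidiagonal (d * m),
        p ∉ (Finset.HasAntidiagonal.antidiagonal m).image (fun q : ℕ × ℕ => (d * q.1, d * q.2)) →
        coeff p.1 (substPow d a) * coeff p.2 (substPow d b) = 0 := by
      intro p hp hpim
      rw [Finset.HasAntidiagonal.mem_antidiagonal] at hp
      rw [coeff_substPow, coeff_substPow]
      by_cases h1 : d ∣ p.1
      · by_cases h2 : d ∣ p.2
        · exfalso
          apply hpim
          simp only [Finset.mem_image, Finset.HasAntidiagonal.mem_antidiagonal]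
          refine ⟨(p.1 / d, p.2 / d), ?_, ?_⟩
          · have : d * (p.1 / d + p.2 / d) = d * m := by
              rw [Nat.mul_add, Nat.mul_div_cancel' h1, Nat.mul_div_cancel' h2, hp]
            exact Nat.eq_of_mul_eq_mul_left hd this
          · rw [Nat.mul_div_cancel' h1, Nat.mul_div_cancel' h2]
        · rw [if_neg h2, mul_zero]
      · rw [if_neg h1, zero_mul]
    rw [← Finset.sum_subset hsub hzero, Finset.sum_image ?_]
    · refine Finset.sum_congr rfl fun q hq => ?_
      rw [coeff_substPow, coeff_substPow, if_pos ⟨q.1, rfl⟩, if_pos ⟨q.2, rfl⟩,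
        Nat.mul_div_cancel_left _ hd, Nat.mul_div_cancel_left _ hd]
    · intro q hq q' hq' hqq
      simp only [Prod.mk.injEq] at hqq
      exact Prod.ext (Nat.eq_of_mul_eq_mul_left hd hqq.1) (Nat.eq_of_mul_eq_mul_left hd hqq.2)
  · rw [if_neg h, coeff_mul]
    symm
    refine Finset.sum_eq_zero fun p hp => ?_
    rw [Finset.HasAntidiagonal.mem_antidiagonal] at hp
    rw [coeff_substPow, coeff_substPow]
    by_cases h1 : d ∣ p.1
    · have h2 : ¬ d ∣ p.2 := fun h2 => h (hp ▸ Nat.dvd_add h1 h2)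
      rw [if_neg h2, mul_zero]
    · rw [if_neg h1, zero_mul]

lemma substPow_one {d : ℕ} (hd : 0 < d) : substPow d (1 : PowerSeries ℚ) = 1 := by
  ext n
  rw [coeff_substPow]
  rcases Nat.eq_zero_or_pos n with rfl | hn
  · simp
  · have hn0 : n ≠ 0 := by omega
    by_cases h : d ∣ n
    · rw [if_pos h]
      obtain ⟨m, rfl⟩ := h
      rw [Nat.mul_div_cancel_left _ hd, coeff_one, coeff_one]
      have hm : m ≠ 0 := by rintro rfl; omega
      rw [if_neg hm, if_neg (by omega : ¬ d * m = 0)]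
    · rw [if_neg h, coeff_one, if_neg hn0]

lemma substPow_pow {d : ℕ} (hd : 0 < d) (a : PowerSeries ℚ) (j : ℕ) :
    substPow d (a ^ j) = substPow d a ^ j := by
  induction j with
  | zero => rw [pow_zero, pow_zero, substPow_one hd]
  | succ j ih => rw [pow_succ, pow_succ, substPow_mul hd, ih]

lemma substPow_expPS {d : ℕ} (hd : 0 < d) {f : PowerSeries ℚ}
    (hf : constantCoeff f = 0) :
    substPow d (expPS f) = expPS (substPow d f) := by
  have hsf : constantCoeff (substPow d f) = 0 := by
    rw [constantCoeff_substPow, hf]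
  ext n
  have step1 : coeff n (expPS (substPow d f)) =
      coeff n (substPow d (∑ j ∈ Finset.range (n + 1), (j.factorial : ℚ)⁻¹ • f ^ j)) := by
    rw [coeff_expPS hsf (K := n + 1) (by omega), substPow_sum]
    congr 1
    refine Finset.sum_congr rfl fun j hj => ?_
    rw [substPow_smul, substPow_pow hd]
  rw [step1, coeff_substPow, coeff_substPow]
  by_cases h : d ∣ n
  · rw [if_pos h, if_pos h, coeff_expPS hf (K := n + 1) (by have := Nat.div_le_self n d; omega)]
  · rw [if_neg h, if_neg h]

noncomputable def logOneSub : PowerSeries ℚ :=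
  PowerSeries.mk fun m => if m = 0 then 0 else -1 / (m : ℚ)

lemma constantCoeff_logOneSub : constantCoeff logOneSub = 0 := by
  rw [← coeff_zero_eq_constantCoeff_apply, logOneSub, coeff_mk, if_pos rfl]

lemma derivativeFun_logOneSub_mul : derivativeFun logOneSub * (1 - X) = -1 := by
  have hu : ∀ n, coeff n (derivativeFun logOneSub) = -1 := by
    intro n
    simp only [show ∀ g : PowerSeries ℚ, derivativeFun g = derivative ℚ g from fun _ => rfl]
    rw [coeff_derivativeFun, logOneSub, coeff_mk, if_neg (Nat.succ_ne_zero n)]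
    have : ((n:ℚ) + 1) ≠ 0 := by positivity
    push_cast
    field_simp
  ext n
  rw [mul_sub, mul_one, map_sub]
  rcases Nat.eq_zero_or_pos n with rfl | hn
  · rw [hu 0, coeff_zero_mul_X, sub_zero, map_neg]
    simp
  · obtain ⟨m, rfl⟩ := Nat.exists_eq_add_of_lt hn
    rw [zero_add, coeff_succ_mul_X, hu, hu, sub_self]
    have : (coeff (m + 1)) (-1 : PowerSeries ℚ) = 0 := by
      rw [map_neg, coeff_one, if_neg (Nat.succ_ne_zero m), neg_zero]
    rw [this]

lemma one_sub_X_eq : (1 - X : PowerSeries ℚ) = expPS logOneSub := by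
  refine ode_unique (u := derivativeFun logOneSub) ?_ (deriv_expPS constantCoeff_logOneSub) ?_
  · rw [derivativeFun_logOneSub_mul]
    have : derivativeFun (1 - X : PowerSeries ℚ) = (PowerSeries.derivative ℚ) (1 - X) := rfl
    rw [this, map_sub, derivative_X]
    have h1 : (PowerSeries.derivative ℚ) (1 : PowerSeries ℚ) = 0 := by
      exact Derivation.map_one_eq_zero _
    rw [h1, zero_sub]
  · rw [coeff_zero_expPS, map_sub]
    simp

lemma substPow_X {d : ℕ} (hd : 0 < d) : substPow d (X : PowerSeries ℚ) = X ^ d := by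
  ext n
  rw [coeff_substPow, coeff_X_pow]
  by_cases h : n = d
  · subst h
    rw [if_pos rfl, if_pos (dvd_refl _), Nat.div_self hd, coeff_X, if_pos rfl]
  · rw [if_neg h]
    by_cases h2 : d ∣ n
    · rw [if_pos h2, coeff_X, if_neg]
      obtain ⟨m, rfl⟩ := h2
      rw [Nat.mul_div_cancel_left _ hd]
      rintro rfl
      omega
    · rw [if_neg h2]

lemma coeff_logOneSub (n : ℕ) :
    coeff n logOneSub = if n = 0 then 0 else -1 / (n : ℚ) :=
  coeff_mk _ _

lemma one_sub_X_pow_eq {d : ℕ} (hd : 0 < d) :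
    (1 - X ^ d : PowerSeries ℚ) = expPS (substPow d logOneSub) := by
  have : (1 - X ^ d : PowerSeries ℚ) = substPow d (1 - X) := by
    have hneg : substPow d (-X : PowerSeries ℚ) = -substPow d X := by
      ext n
      rw [coeff_substPow, map_neg, map_neg, coeff_substPow]
      by_cases h : d ∣ n <;> simp [h]
    rw [sub_eq_add_neg, sub_eq_add_neg, substPow_add, substPow_one hd, hneg, substPow_X hd]
  rw [this, one_sub_X_eq, substPow_expPS hd constantCoeff_logOneSub]


lemma trace_pi {ι : Type} [Fintype ι] [DecidableEq ι] (W : ι → Type*)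
    [∀ i, AddCommGroup (W i)] [∀ i, Module ℚ (W i)] [∀ i, FiniteDimensional ℚ (W i)]
    (G : (Π i, W i) →ₗ[ℚ] (Π i, W i)) :
    LinearMap.trace ℚ _ G =
      ∑ i, LinearMap.trace ℚ (W i)
        ((LinearMap.proj i) ∘ₗ G ∘ₗ (LinearMap.single ℚ W i)) := by
  have hid : G = ∑ i, (G ∘ₗ LinearMap.single ℚ W i) ∘ₗ (LinearMap.proj i) := by
    apply LinearMap.ext
    intro x
    rw [LinearMap.sum_apply]
    simp only [LinearMap.comp_apply, LinearMap.proj_apply, LinearMap.single_apply]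
    rw [← map_sum]
    congr 1
    exact (Finset.univ_sum_single x).symm
  conv_lhs => rw [hid]
  rw [map_sum]
  refine Finset.sum_congr rfl fun i _ => ?_
  rw [LinearMap.trace_comp_comm' (LinearMap.proj i) (G ∘ₗ LinearMap.single ℚ W i)]

lemma pow_single_eq {s' : ℕ} (σ : Equiv.Perm (Fin s')) {W : Fin s' → Type*}
    [∀ i, AddCommGroup (W i)] [∀ i, Module ℚ (W i)]
    (G : (Π i, W i) →ₗ[ℚ] (Π i, W i))
    (hG : ∀ (i : Fin s') (v : W i), ∃ w : W (σ i), G (Pi.single i v) = Pi.single (σ i) w)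
    (m : ℕ) (i : Fin s') (v : W i) :
    ∃ (i' : Fin s') (w : W i'), i' = (σ ^ m) i ∧
      (G ^ m) (Pi.single i v) = Pi.single i' w := by
  induction m generalizing i v with
  | zero =>
    exact ⟨i, v, by simp, by simp⟩
  | succ m ih =>
    obtain ⟨w₀, hw₀⟩ := hG i v
    obtain ⟨i', w, hi', hw⟩ := ih (σ i) w₀
    refine ⟨i', w, ?_, ?_⟩
    · rw [hi', pow_succ, Equiv.Perm.mul_apply]
    · rw [pow_succ, Module.End.mul_apply, hw₀, hw]

lemma proj_pow_single_eq_zero {s' : ℕ} (σ : Equiv.Perm (Fin s')) {W : Fin s' → Type*}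
    [∀ i, AddCommGroup (W i)] [∀ i, Module ℚ (W i)]
    (G : (Π i, W i) →ₗ[ℚ] (Π i, W i))
    (hG : ∀ (i : Fin s') (v : W i), ∃ w : W (σ i), G (Pi.single i v) = Pi.single (σ i) w)
    (m : ℕ) (i : Fin s') (hne : (σ ^ m) i ≠ i) :
    (LinearMap.proj i) ∘ₗ (G ^ m) ∘ₗ (LinearMap.single ℚ W i) = 0 := by
  apply LinearMap.ext
  intro v
  obtain ⟨i', w, hi', hw⟩ := pow_single_eq σ G hG m i v
  simp only [LinearMap.comp_apply, LinearMap.proj_apply, LinearMap.single_apply,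
    LinearMap.zero_apply]
  rw [hw]
  exact Pi.single_eq_of_ne (by rw [hi']; exact fun h => hne h.symm) w

lemma orbit_period {s' : ℕ} (σ : Equiv.Perm (Fin s')) (Λj : Finset (Fin s'))
    (i : Fin s') (hi : i ∈ Λj)
    (horb : ∀ i', i' ∈ Λj ↔ ∃ m : ℕ, (σ ^ m) i = i') (n : ℕ) :
    (σ ^ n) i = i ↔ Λj.card ∣ n := by
  have : Finite (Fin s') := by infer_instance
  have hper : i ∈ Function.periodicPts σ := by
    refine ⟨orderOf σ, orderOf_pos σ, ?_⟩
    show (σ : Fin s' → Fin s')^[orderOf σ] i = i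
    rw [Equiv.Perm.iterate_eq_pow, pow_orderOf_eq_one]
    rfl
  set T := Function.minimalPeriod σ i with hT
  have hTpos : 0 < T := Function.minimalPeriod_pos_of_mem_periodicPts hper
  have hcard : Λj.card = T := by
    have himg : Λj = (Finset.range T).image (fun m => (σ ^ m) i) := by
      ext i'
      rw [Finset.mem_image, horb]
      constructor
      · rintro ⟨m, rfl⟩
        refine ⟨m % T, Finset.mem_range.mpr (Nat.mod_lt _ hTpos), ?_⟩
        rw [← Equiv.Perm.iterate_eq_pow, ← Equiv.Perm.iterate_eq_pow]
        exact Function.iterate_mod_minimalPeriod_eq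
      · rintro ⟨m, _, rfl⟩
        exact ⟨m, rfl⟩
    rw [himg, Finset.card_image_of_injOn, Finset.card_range]
    intro a ha b hb hab
    have ha' : a ∈ Set.Iio T := Finset.mem_range.mp (Finset.mem_coe.mp ha)
    have hb' : b ∈ Set.Iio T := Finset.mem_range.mp (Finset.mem_coe.mp hb)
    refine Function.iterate_injOn_Iio_minimalPeriod ha' hb' ?_
    show (σ : Fin s' → Fin s')^[a] i = (σ : Fin s' → Fin s')^[b] i
    rw [Equiv.Perm.iterate_eq_pow, Equiv.Perm.iterate_eq_pow]
    exact hab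
  rw [hcard]
  have : ((σ ^ n) i = i) ↔ Function.IsPeriodicPt σ n i := by
    rw [Function.IsPeriodicPt, Function.IsFixedPt, Equiv.Perm.iterate_eq_pow]
  rw [this, Function.isPeriodicPt_iff_minimalPeriod_dvd]

end Stmt9Aux

open PowerSeries Stmt9Aux in
/-- **Lefschetz zeta function of a permutative squared-by-blocks map on a wedge sum (main
theorem, part (b)).**  In the permutative algebraic model (`σ` a permutation of `{1,…,s}`
with orbits `Λ 1, …, Λ q` of cardinalities `s₁, …, s_q`; `F k` the block-permutation
endomorphism of `⊕_i V i k` built from the maps `A i k : V i k → V (σ i) k`), with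
`L m = 1 + ∑_{k=1}^N (-1)^k tr(F_k^m)`,
`Lc i m = 1 + ∑_{k=1}^N (-1)^k tr(π_{i,k} ∘ F_k^m ∘ ι_{i,k})`,
`ζ_f(t) = exp(∑_{m≥1} L(f^m) t^m/m)`, and `M = lcm(s₁,…,s_q)`, the identity
`((1 − t)·ζ_f(t))^M = ∏_{j=1}^q (∏_{i∈Λ_j} (1 − t^{s_j})·ζ_{f_ii^{s_j}}(t^{s_j}))^{M/s_j}`
holds in `ℚ[[t]]`, where `ζ_{f_ii^{s_j}}(t^{s_j})` is `exp(∑_{m≥1} L(f_ii^{s_j m}) t^m/m)`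
with `t^{s_j}` substituted for `t`. -/
theorem stmt9 (s N q : ℕ) (hs : 1 ≤ s) (hN : 1 ≤ N)
    (σ : Equiv.Perm (Fin s))
    (Λ : Fin q → Finset (Fin s))
    (hΛorb : ∀ j, ∀ i ∈ Λ j, ∀ i', i' ∈ Λ j ↔ ∃ m : ℕ, (σ ^ m) i = i')
    (hΛne : ∀ j, (Λ j).Nonempty)
    (hΛcover : ∀ i, ∃ j, i ∈ Λ j)
    (hΛdisj : ∀ j j', j ≠ j' → Disjoint (Λ j) (Λ j'))
    (sVec : Fin q → ℕ) (hsVec : ∀ j, sVec j = (Λ j).card)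
    (M : ℕ) (hM : M = Finset.univ.lcm sVec)
    (V : Fin s → Fin N → Type*)
    [∀ i k, AddCommGroup (V i k)] [∀ i k, Module ℚ (V i k)]
    [∀ i k, FiniteDimensional ℚ (V i k)]
    (hdim : ∀ (k : Fin N) (i i' : Fin s), (∃ m : ℕ, (σ ^ m) i = i') →
      Module.finrank ℚ (V i k) = Module.finrank ℚ (V i' k))
    (A : ∀ i k, V i k →ₗ[ℚ] V (σ i) k)
    (F : ∀ k, (Π i, V i k) →ₗ[ℚ] (Π i, V i k))
    (hF : ∀ k (i : Fin s) (v : V i k), F k (Pi.single i v) = Pi.single (σ i) (A i k v))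
    (L : ℕ → ℚ)
    (hL : ∀ m, L m =
      1 + ∑ k : Fin N, (-1 : ℚ) ^ ((k : ℕ) + 1) *
        LinearMap.trace ℚ (Π i, V i k) ((F k) ^ m))
    (Lc : Fin s → ℕ → ℚ)
    (hLc : ∀ i m, Lc i m =
      1 + ∑ k : Fin N, (-1 : ℚ) ^ ((k : ℕ) + 1) *
        LinearMap.trace ℚ (V i k)
          ((LinearMap.proj i) ∘ₗ ((F k) ^ m) ∘ₗ (LinearMap.single ℚ (fun j => V j k) i))) :
    ((1 - PowerSeries.X) * lefschetzZeta L) ^ M =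
      ∏ j : Fin q,
        (∏ i ∈ Λ j, (1 - PowerSeries.X ^ (sVec j)) *
          substPow (sVec j) (lefschetzZeta (fun m => Lc i (sVec j * m)))) ^ (M / sVec j) := by
  classical
  have hd : ∀ j, 0 < sVec j := fun j => by
    rw [hsVec j]; exact Finset.card_pos.mpr (hΛne j)
  -- the argument series
  set PL : PowerSeries ℚ := PowerSeries.mk fun m => if m = 0 then 0 else L m / (m : ℚ) with hPL
  set Pc : Fin q → Fin s → PowerSeries ℚ := fun j i =>
    PowerSeries.mk fun m => if m = 0 then 0 else Lc i (sVec j * m) / (m : ℚ) with hPcdef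
  have hPL0 : constantCoeff PL = 0 := by
    rw [← coeff_zero_eq_constantCoeff_apply, hPL, coeff_mk, if_pos rfl]
  have hPc0 : ∀ j i, constantCoeff (Pc j i) = 0 := fun j i => by
    rw [← coeff_zero_eq_constantCoeff_apply, hPcdef, coeff_mk, if_pos rfl]
  have hsub0 : ∀ j (g : PowerSeries ℚ), constantCoeff g = 0 →
      constantCoeff (substPow (sVec j) g) = 0 := fun j g hg => by
    rw [constantCoeff_substPow, hg]
  -- rewrite the left-hand side
  have hlhs : ((1 - PowerSeries.X) * lefschetzZeta L) ^ M = expPS (M • (logOneSub + PL)) := by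
    rw [show lefschetzZeta L = expPS PL from rfl, one_sub_X_eq,
      ← expPS_add constantCoeff_logOneSub hPL0,
      expPS_pow (by rw [map_add, constantCoeff_logOneSub, hPL0, add_zero])]
  -- rewrite the right-hand side
  have hrhs : ∏ j : Fin q,
      (∏ i ∈ Λ j, (1 - PowerSeries.X ^ (sVec j)) *
        substPow (sVec j) (lefschetzZeta (fun m => Lc i (sVec j * m)))) ^ (M / sVec j)
      = expPS (∑ j : Fin q, (M / sVec j) •
          ∑ i ∈ Λ j, (substPow (sVec j) logOneSub + substPow (sVec j) (Pc j i))) := by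
    have hinner : ∀ j, ∀ i ∈ Λ j,
        (1 - PowerSeries.X ^ (sVec j)) *
          substPow (sVec j) (lefschetzZeta (fun m => Lc i (sVec j * m)))
        = expPS (substPow (sVec j) logOneSub + substPow (sVec j) (Pc j i)) := by
      intro j i _
      rw [one_sub_X_pow_eq (hd j),
        show lefschetzZeta (fun m => Lc i (sVec j * m)) = expPS (Pc j i) from rfl,
        substPow_expPS (hd j) (hPc0 j i),
        ← expPS_add (hsub0 j _ constantCoeff_logOneSub) (hsub0 j _ (hPc0 j i))]
    have hsum0 : ∀ j, constantCoeff
        (∑ i ∈ Λ j, (substPow (sVec j) logOneSub + substPow (sVec j) (Pc j i))) = 0 := by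
      intro j
      rw [map_sum]
      refine Finset.sum_eq_zero fun i _ => ?_
      rw [map_add, hsub0 j _ constantCoeff_logOneSub, hsub0 j _ (hPc0 j i), add_zero]
    calc ∏ j : Fin q, (∏ i ∈ Λ j, (1 - PowerSeries.X ^ (sVec j)) *
          substPow (sVec j) (lefschetzZeta (fun m => Lc i (sVec j * m)))) ^ (M / sVec j)
        = ∏ j : Fin q, expPS ((M / sVec j) •
            ∑ i ∈ Λ j, (substPow (sVec j) logOneSub + substPow (sVec j) (Pc j i))) := by
          refine Finset.prod_congr rfl fun j _ => ?_
          rw [Finset.prod_congr rfl (hinner j),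
            expPS_sum _ _ (fun i hi => by
              rw [map_add, hsub0 j _ constantCoeff_logOneSub, hsub0 j _ (hPc0 j i), add_zero]),
            expPS_pow (hsum0 j)]
      _ = _ := by
          rw [expPS_sum _ _ (fun j _ => by rw [map_nsmul, hsum0 j, smul_zero])]
  rw [hlhs, hrhs]
  -- the key combinatorial identity on Lefschetz numbers
  have core : ∀ n : ℕ, n ≠ 0 →
      L n - 1 = ∑ j : Fin q, ∑ i ∈ Λ j, (if sVec j ∣ n then Lc i n - 1 else 0) := by
    intro n hn
    have hstep1 : L n - 1 = ∑ i : Fin s, (Lc i n - 1) := by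
      have htr : ∀ k : Fin N, LinearMap.trace ℚ (Π i, V i k) ((F k) ^ n) =
          ∑ i : Fin s, LinearMap.trace ℚ (V i k)
            ((LinearMap.proj i) ∘ₗ ((F k) ^ n) ∘ₗ (LinearMap.single ℚ (fun j => V j k) i)) :=
        fun k => trace_pi (fun i => V i k) ((F k) ^ n)
      have hLci : ∀ i, Lc i n - 1 = ∑ k : Fin N, (-1 : ℚ) ^ ((k : ℕ) + 1) *
          LinearMap.trace ℚ (V i k)
            ((LinearMap.proj i) ∘ₗ ((F k) ^ n) ∘ₗ (LinearMap.single ℚ (fun j => V j k) i)) :=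
        fun i => by rw [hLc i n]; ring
      rw [hL n, add_sub_cancel_left, Finset.sum_congr rfl fun i _ => hLci i,
        Finset.sum_congr rfl fun k (_ : k ∈ Finset.univ) => congrArg _ (htr k)]
      simp_rw [Finset.mul_sum]
      exact Finset.sum_comm
    have huniv : Finset.univ.biUnion Λ = (Finset.univ : Finset (Fin s)) := by
      ext i
      simp only [Finset.mem_biUnion, Finset.mem_univ, true_and, iff_true]
      exact hΛcover i
    have hpart : ∑ i : Fin s, (Lc i n - 1) = ∑ j : Fin q, ∑ i ∈ Λ j, (Lc i n - 1) := by
      rw [← huniv, Finset.sum_biUnion]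
      intro j _ j' _ hjj'
      exact hΛdisj j j' hjj'
    rw [hstep1, hpart]
    refine Finset.sum_congr rfl fun j _ => Finset.sum_congr rfl fun i hi => ?_
    by_cases hdvd : sVec j ∣ n
    · rw [if_pos hdvd]
    · rw [if_neg hdvd]
      have hne : (σ ^ n) i ≠ i := fun h => hdvd (by
        rw [hsVec j]
        exact (orbit_period σ (Λ j) i hi (hΛorb j i hi) n).mp h)
      have hz : ∀ k : Fin N, (LinearMap.proj i) ∘ₗ ((F k) ^ n) ∘ₗ
          (LinearMap.single ℚ (fun j => V j k) i) = 0 :=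
        fun k => proj_pow_single_eq_zero σ (F k) (fun i v => ⟨A i k v, hF k i v⟩) n i hne
      rw [hLc i n]
      simp [hz]
  -- conclude by comparing coefficients of the exponents
  have hMdvd : ∀ j, sVec j ∣ M := fun j => hM ▸ Finset.dvd_lcm (Finset.mem_univ j)
  suffices hkey : M • (logOneSub + PL) = ∑ j : Fin q, (M / sVec j) •
      ∑ i ∈ Λ j, (substPow (sVec j) logOneSub + substPow (sVec j) (Pc j i)) by
    rw [hkey]
  ext n
  rw [map_nsmul, map_sum]
  by_cases hn : n = 0
  · subst hn
    have hz : ∀ j : Fin q, (coeff 0) ((M / sVec j) •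
        ∑ i ∈ Λ j, (substPow (sVec j) logOneSub + substPow (sVec j) (Pc j i))) = 0 := by
      intro j
      rw [map_nsmul, map_sum]
      have hzz : ∀ i ∈ Λ j, (coeff 0)
          (substPow (sVec j) logOneSub + substPow (sVec j) (Pc j i)) = 0 := by
        intro i _
        rw [map_add, coeff_zero_eq_constantCoeff_apply, coeff_zero_eq_constantCoeff_apply,
          hsub0 j _ constantCoeff_logOneSub, hsub0 j _ (hPc0 j i), add_zero]
      rw [Finset.sum_congr rfl hzz, Finset.sum_const_zero, smul_zero]
    rw [Finset.sum_congr rfl fun j _ => hz j, Finset.sum_const_zero, map_add,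
      coeff_logOneSub, if_pos rfl, hPL, coeff_mk, if_pos rfl, add_zero, smul_zero]
  · -- n ≠ 0
    have hnQ : (n : ℚ) ≠ 0 := Nat.cast_ne_zero.mpr hn
    have hLHS : (coeff n) (logOneSub + PL) = (L n - 1) / (n : ℚ) := by
      rw [map_add, coeff_logOneSub, if_neg hn, hPL, coeff_mk, if_neg hn]
      field_simp
      ring
    have hRHS : ∀ j : Fin q, (coeff n) ((M / sVec j) •
        ∑ i ∈ Λ j, (substPow (sVec j) logOneSub + substPow (sVec j) (Pc j i))) =
        ∑ i ∈ Λ j, (if sVec j ∣ n then Lc i n - 1 else 0) * ((M : ℚ) / (n : ℚ)) := by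
      intro j
      rw [map_nsmul, map_sum, Finset.smul_sum]
      refine Finset.sum_congr rfl fun i _ => ?_
      rw [map_add, coeff_substPow, coeff_substPow, coeff_logOneSub, hPcdef, coeff_mk]
      by_cases hdvd : sVec j ∣ n
      · rw [if_pos hdvd, if_pos hdvd, if_pos hdvd]
        have hnd : n / sVec j ≠ 0 := by
          intro h
          apply hn
          rw [← Nat.mul_div_cancel' hdvd, h, Nat.mul_zero]
        rw [if_neg hnd, if_neg hnd, Nat.mul_div_cancel' hdvd]
        have hdQ : ((sVec j : ℚ)) ≠ 0 := Nat.cast_ne_zero.mpr (by have := hd j; omega)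
        have hcast1 : ((n / sVec j : ℕ) : ℚ) = (n : ℚ) / (sVec j : ℚ) :=
          Nat.cast_div hdvd hdQ
        have hcast2 : ((M / sVec j : ℕ) : ℚ) = (M : ℚ) / (sVec j : ℚ) :=
          Nat.cast_div (hMdvd j) hdQ
        rw [nsmul_eq_mul, hcast1, hcast2]
        have hndQ : ((n : ℚ) / (sVec j : ℚ)) ≠ 0 := by
          rw [← hcast1]
          exact Nat.cast_ne_zero.mpr hnd
        field_simp
        ring
      · rw [if_neg hdvd, if_neg hdvd, if_neg hdvd, add_zero, smul_zero, zero_mul]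
    rw [Finset.sum_congr rfl fun j _ => hRHS j, hLHS]
    simp_rw [← Finset.sum_mul]
    rw [← core n hn, nsmul_eq_mul]
    field_simp
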